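/- arXiv:1204.5154 — 2 statements merged into one kernel-verified Lean document; each statement's English description precedes it below -/
import Mathlib

section
/- Let A and B be N×N complex Hermitian matrices and let z ∈ ℂ with Im(z) > 0. Then the matrices z·I_N − A and z·I_N − B are invertible and | Tr((z·I_N − A)^{-1}) − Tr((z·I_N − B)^{-1}) | ≤ 2 · rank(A − B) / Im(z). -/
set_option maxHeartbeats 1000000

open Matrix

noncomputable section

open scoped InnerProductSpace

lemma aux_trace_le {N : ℕ} (f : EuclideanSpace ℂ (Fin N) →ₗ[ℂ] EuclideanSpace ℂ (Fin N))
    (c : ℝ) (hf : ∀ x, ‖f x‖ ≤ c * ‖x‖) :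
    ‖LinearMap.trace ℂ (EuclideanSpace ℂ (Fin N)) f‖ ≤
      (Module.finrank ℂ (LinearMap.range f) : ℝ) * c := by
  have hfc : f = (LinearMap.range f).subtype ∘ₗ f.rangeRestrict :=
    (LinearMap.subtype_comp_codRestrict f _ (LinearMap.mem_range_self f)).symm
  have htr : LinearMap.trace ℂ (EuclideanSpace ℂ (Fin N)) f
      = LinearMap.trace ℂ (LinearMap.range f) (f.rangeRestrict ∘ₗ (LinearMap.range f).subtype) := by
    conv_lhs => rw [hfc]
    exact LinearMap.trace_comp_comm' f.rangeRestrict (LinearMap.range f).subtype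
  set V : Submodule ℂ (EuclideanSpace ℂ (Fin N)) := LinearMap.range f with hV
  letI : InnerProductSpace ℂ V := inferInstance
  set g : V →ₗ[ℂ] V := f.rangeRestrict ∘ₗ V.subtype with hg
  let b : OrthonormalBasis (Fin (Module.finrank ℂ V)) ℂ V := stdOrthonormalBasis ℂ V
  have htr2 : LinearMap.trace ℂ V g =
      Matrix.trace (LinearMap.toMatrix b.toBasis b.toBasis g) :=
    LinearMap.trace_eq_matrix_trace ℂ b.toBasis g
  rw [htr, htr2, Matrix.trace]
  refine le_trans (norm_sum_le _ _) ?_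
  have hcard : ∀ i, ‖Matrix.diag (LinearMap.toMatrix b.toBasis b.toBasis g) i‖ ≤ c := by
    intro i
    have hdiag : Matrix.diag (LinearMap.toMatrix b.toBasis b.toBasis g) i
        = ⟪b i, g (b i)⟫_ℂ := by
      rw [Matrix.diag, LinearMap.toMatrix_apply, OrthonormalBasis.coe_toBasis,
        OrthonormalBasis.coe_toBasis_repr_apply, OrthonormalBasis.repr_apply_apply]
    rw [hdiag]
    refine le_trans (norm_inner_le_norm (𝕜 := ℂ) (b i) (g (b i))) ?_
    have h1 : ‖b i‖ = 1 := b.orthonormal.1 i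
    have h2 : ‖g (b i)‖ ≤ c := by
      have heq : ‖g (b i)‖ = ‖f ((b i : EuclideanSpace ℂ (Fin N)))‖ := rfl
      rw [heq]
      calc ‖f ((b i : EuclideanSpace ℂ (Fin N)))‖
          ≤ c * ‖(b i : EuclideanSpace ℂ (Fin N))‖ := hf _
        _ = c := by rw [show ‖(b i : EuclideanSpace ℂ (Fin N))‖ = ‖b i‖ from rfl, h1, mul_one]
    calc ‖b i‖ * ‖g (b i)‖ = ‖g (b i)‖ := by rw [h1, one_mul]
      _ ≤ c := h2
  calc ∑ i, ‖Matrix.diag (LinearMap.toMatrix b.toBasis b.toBasis g) i‖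
      ≤ ∑ _i : Fin (Module.finrank ℂ V), c := Finset.sum_le_sum fun i _ => hcard i
    _ = (Module.finrank ℂ V : ℝ) * c := by
        rw [Finset.sum_const, Finset.card_univ, Fintype.card_fin, nsmul_eq_mul]

lemma aux_key {N : ℕ} (A : Matrix (Fin N) (Fin N) ℂ) (hA : A.IsHermitian) (z : ℂ)
    (x : EuclideanSpace ℂ (Fin N)) :
    z.im * (‖x‖ * ‖x‖) ≤ ‖toEuclideanLin (z • (1 : Matrix (Fin N) (Fin N) ℂ) - A) x‖ * ‖x‖ := by
  have hT : (toEuclideanLin A).IsSymmetric := Matrix.isHermitian_iff_isSymmetric.mp hA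
  have h1 : toEuclideanLin (1 : Matrix (Fin N) (Fin N) ℂ) x = x := by
    rw [toEuclideanLin_apply, Matrix.one_mulVec]
  have happ : toEuclideanLin (z • (1 : Matrix (Fin N) (Fin N) ℂ) - A) x
      = z • x - toEuclideanLin A x := by
    rw [map_sub, _root_.map_smul, LinearMap.sub_apply, LinearMap.smul_apply, h1]
  have him : (⟪x, toEuclideanLin (z • (1 : Matrix (Fin N) (Fin N) ℂ) - A) x⟫_ℂ).im
      = z.im * (‖x‖ * ‖x‖) := by
    rw [happ, inner_sub_right, inner_smul_right]
    have hreal : (⟪x, toEuclideanLin A x⟫_ℂ).im = 0 := by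
      have h1 : (starRingEnd ℂ) ⟪x, toEuclideanLin A x⟫_ℂ = ⟪x, toEuclideanLin A x⟫_ℂ := by
        rw [inner_conj_symm]; exact hT x x
      exact (Complex.conj_eq_iff_im.mp h1)
    have hxx_im : (⟪x, x⟫_ℂ).im = 0 := by
      have h3 := inner_self_im (𝕜 := ℂ) x
      simpa using h3
    have hxx_re : (⟪x, x⟫_ℂ).re = ‖x‖ * ‖x‖ := by
      have h3 := inner_self_eq_norm_mul_norm (𝕜 := ℂ) x
      simpa using h3
    rw [Complex.sub_im, hreal, sub_zero, Complex.mul_im, hxx_im, hxx_re, mul_zero, zero_add]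
  calc z.im * (‖x‖ * ‖x‖)
      = (⟪x, toEuclideanLin (z • (1 : Matrix (Fin N) (Fin N) ℂ) - A) x⟫_ℂ).im := him.symm
    _ ≤ ‖⟪x, toEuclideanLin (z • (1 : Matrix (Fin N) (Fin N) ℂ) - A) x⟫_ℂ‖ := by
        calc (⟪x, toEuclideanLin (z • (1 : Matrix (Fin N) (Fin N) ℂ) - A) x⟫_ℂ).im
            ≤ |(⟪x, toEuclideanLin (z • (1 : Matrix (Fin N) (Fin N) ℂ) - A) x⟫_ℂ).im| :=
              le_abs_self _
          _ ≤ ‖⟪x, toEuclideanLin (z • (1 : Matrix (Fin N) (Fin N) ℂ) - A) x⟫_ℂ‖ :=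
              Complex.abs_im_le_norm _
          _ = ‖⟪x, toEuclideanLin (z • (1 : Matrix (Fin N) (Fin N) ℂ) - A) x⟫_ℂ‖ := rfl
    _ ≤ ‖x‖ * ‖toEuclideanLin (z • (1 : Matrix (Fin N) (Fin N) ℂ) - A) x‖ :=
        norm_inner_le_norm _ _
    _ = ‖toEuclideanLin (z • (1 : Matrix (Fin N) (Fin N) ℂ) - A) x‖ * ‖x‖ := mul_comm _ _

lemma aux_isUnit {N : ℕ} (A : Matrix (Fin N) (Fin N) ℂ) (hA : A.IsHermitian) (z : ℂ)
    (hz : 0 < z.im) : IsUnit (z • (1 : Matrix (Fin N) (Fin N) ℂ) - A) := by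
  rw [← Matrix.mulVec_injective_iff_isUnit]
  have hinj : Function.Injective (z • (1 : Matrix (Fin N) (Fin N) ℂ) - A).mulVecLin := by
    rw [← LinearMap.ker_eq_bot, LinearMap.ker_eq_bot']
    intro v hv
    set x : EuclideanSpace ℂ (Fin N) := (WithLp.equiv 2 (Fin N → ℂ)).symm v with hx
    have hx0 : toEuclideanLin (z • (1 : Matrix (Fin N) (Fin N) ℂ) - A) x = 0 := by
      rw [hx]; change WithLp.toLp 2 ((z • (1 : Matrix (Fin N) (Fin N) ℂ) - A) *ᵥ v) = 0
      rw [Matrix.mulVecLin_apply] at hv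
      rw [hv]
      rfl
    have hk := aux_key A hA z x
    rw [hx0] at hk
    simp only [norm_zero, zero_mul] at hk
    have hn : ‖x‖ = 0 := by
      by_contra h
      have hp : 0 < ‖x‖ := lt_of_le_of_ne (norm_nonneg x) (Ne.symm h)
      nlinarith [mul_pos hz (mul_pos hp hp)]
    have hx0' : x = 0 := norm_eq_zero.mp hn
    have : v = 0 := by
      have h := congrArg (WithLp.equiv 2 (Fin N → ℂ)) hx0'
      simpa [hx] using h
    exact this
  exact hinj

lemma aux_res_bound {N : ℕ} (A : Matrix (Fin N) (Fin N) ℂ) (hA : A.IsHermitian) (z : ℂ)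
    (hz : 0 < z.im) (x : EuclideanSpace ℂ (Fin N)) :
    ‖toEuclideanLin (z • (1 : Matrix (Fin N) (Fin N) ℂ) - A)⁻¹ x‖ ≤ ‖x‖ / z.im := by
  set S := z • (1 : Matrix (Fin N) (Fin N) ℂ) - A with hS
  have hdet : IsUnit S.det := (Matrix.isUnit_iff_isUnit_det _).mp (aux_isUnit A hA z hz)
  set y := toEuclideanLin S⁻¹ x with hy
  have hxy : toEuclideanLin S y = x := by
    apply (WithLp.equiv 2 (Fin N → ℂ)).injective
    change S *ᵥ WithLp.ofLp y = WithLp.ofLp x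
    rw [hy, Matrix.ofLp_toEuclideanLin_apply,
      Matrix.mulVec_mulVec, Matrix.mul_nonsing_inv _ hdet, Matrix.one_mulVec]
  have hk := aux_key A hA z y
  rw [← hS, hxy] at hk
  rcases eq_or_lt_of_le (norm_nonneg y) with h0 | h0
  · rw [← h0]
    positivity
  · rw [le_div_iff₀ hz]
    nlinarith

theorem stmt10 {N : ℕ} (A B : Matrix (Fin N) (Fin N) ℂ)
    (hA : A.IsHermitian) (hB : B.IsHermitian) (z : ℂ) (hz : 0 < z.im) :
    IsUnit (z • (1 : Matrix (Fin N) (Fin N) ℂ) - A) ∧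
    IsUnit (z • (1 : Matrix (Fin N) (Fin N) ℂ) - B) ∧
    ‖(z • (1 : Matrix (Fin N) (Fin N) ℂ) - A)⁻¹.trace -
        (z • (1 : Matrix (Fin N) (Fin N) ℂ) - B)⁻¹.trace‖ ≤
      2 * ((A - B).rank : ℝ) / z.im := by
  refine ⟨aux_isUnit A hA z hz, aux_isUnit B hB z hz, ?_⟩
  set SA := z • (1 : Matrix (Fin N) (Fin N) ℂ) - A with hSA
  set SB := z • (1 : Matrix (Fin N) (Fin N) ℂ) - B with hSB
  have hdetA : IsUnit SA.det := (Matrix.isUnit_iff_isUnit_det _).mp (aux_isUnit A hA z hz)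
  have hdetB : IsUnit SB.det := (Matrix.isUnit_iff_isUnit_det _).mp (aux_isUnit B hB z hz)
  have hAB : A - B = SB - SA := by rw [hSA, hSB]; abel
  have hMident : SA⁻¹ * (A - B) * SB⁻¹ = SA⁻¹ - SB⁻¹ := by
    rw [hAB]
    calc SA⁻¹ * (SB - SA) * SB⁻¹
        = SA⁻¹ * (SB * SB⁻¹) - SA⁻¹ * SA * SB⁻¹ := by noncomm_ring
      _ = SA⁻¹ - SB⁻¹ := by
          rw [Matrix.mul_nonsing_inv _ hdetB, Matrix.nonsing_inv_mul _ hdetA, mul_one, one_mul]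
  have hrank : (SA⁻¹ - SB⁻¹).rank ≤ (A - B).rank := by
    rw [← hMident]
    calc (SA⁻¹ * (A - B) * SB⁻¹).rank ≤ (SA⁻¹ * (A - B)).rank := Matrix.rank_mul_le_left _ _
      _ ≤ (A - B).rank := Matrix.rank_mul_le_right _ _
  have htrace : ∀ M : Matrix (Fin N) (Fin N) ℂ,
      LinearMap.trace ℂ (EuclideanSpace ℂ (Fin N)) (toEuclideanLin M) = M.trace := by
    intro M
    rw [Matrix.toEuclideanLin_eq_toLin_orthonormal,
      LinearMap.trace_eq_matrix_trace ℂ (EuclideanSpace.basisFun (Fin N) ℂ).toBasis,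
      LinearMap.toMatrix_toLin]
  have hrankeq : ∀ M : Matrix (Fin N) (Fin N) ℂ,
      M.rank = Module.finrank ℂ (LinearMap.range (toEuclideanLin M)) := by
    intro M
    rw [Matrix.toEuclideanLin_eq_toLin_orthonormal]
    exact Matrix.rank_eq_finrank_range_toLin M _ _
  have hnorm : ∀ x : EuclideanSpace ℂ (Fin N),
      ‖toEuclideanLin (SA⁻¹ - SB⁻¹) x‖ ≤ (2 / z.im) * ‖x‖ := by
    intro x
    rw [map_sub, LinearMap.sub_apply]
    calc ‖toEuclideanLin SA⁻¹ x - toEuclideanLin SB⁻¹ x‖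
        ≤ ‖toEuclideanLin SA⁻¹ x‖ + ‖toEuclideanLin SB⁻¹ x‖ := norm_sub_le _ _
      _ ≤ ‖x‖ / z.im + ‖x‖ / z.im :=
          add_le_add (aux_res_bound A hA z hz x) (aux_res_bound B hB z hz x)
      _ = (2 / z.im) * ‖x‖ := by ring
  have hfin := aux_trace_le (toEuclideanLin (SA⁻¹ - SB⁻¹)) (2 / z.im) hnorm
  rw [htrace, ← hrankeq, Matrix.trace_sub] at hfin
  calc ‖SA⁻¹.trace - SB⁻¹.trace‖
      ≤ ((SA⁻¹ - SB⁻¹).rank : ℝ) * (2 / z.im) := hfin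
    _ ≤ ((A - B).rank : ℝ) * (2 / z.im) := by
        apply mul_le_mul_of_nonneg_right (by exact_mod_cast hrank)
        positivity
    _ = 2 * ((A - B).rank : ℝ) / z.im := by ring

end
end

section
/- Fix t ≥ 0 and let U_{N,t} ∈ ℂ^N be as in the Gaussian model, with entries U_{N,t}(1),…,U_{N,t}(N). Then for every k ≥ 1 and all positive integers n_1,…,n_k, the limit lim_{N→∞} N^{k − (n_1+⋯+n_k)} · E[ ∏_{j=1}^k |U_{N,t}(j)|^{2 n_j} ] exists and equals: (1−e^{−t})^k + k·e^{−t}·(1−e^{−t})^{k−1} if n_1 = ⋯ = n_k = 1; e^{−n t}·(1−e^{−t})^{k−1} if exactly one of the n_j equals some n ≥ 2 and the remaining k−1 of them equal 1; and 0 if at least two of the n_j are ≥ 2. -/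
open MeasureTheory ProbabilityTheory Matrix Filter Topology
open scoped ENNReal
open Real
open scoped NNReal

noncomputable section

/-- The standard complex Gaussian law on `ℂ` (`E|g|² = 1`): real and imaginary parts
are independent centered real Gaussians of variance `1/2`. -/
def stdCplxGaussian : Measure ℂ :=
  Measure.map (fun p : ℝ × ℝ => (p.1 : ℂ) + (p.2 : ℂ) * Complex.I)
    ((gaussianReal 0 (1 / 2)).prod (gaussianReal 0 (1 / 2)))

/-- The uniform law on `Fin N`. -/
def uniformFin (N : ℕ) : Measure (Fin N) :=
  (N : ℝ≥0∞)⁻¹ • ∑ i : Fin N, Measure.dirac i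

/-- The law of the vector `U_{N,t} = e^{-t/2} √N X_N + √(1-e^{-t}) G_N` of the Gaussian
model, where `X_N` is uniform on the canonical basis of `ℂ^N`, independent of `G_N`
whose entries are i.i.d. standard complex Gaussians. -/
def gaussModelLaw (t : ℝ) (N : ℕ) : Measure (Fin N → ℂ) :=
  Measure.map
    (fun p : Fin N × (Fin N → ℂ) => fun j =>
      ((Real.exp (-t / 2) * Real.sqrt N : ℝ) : ℂ) * (if j = p.1 then 1 else 0) +
        ((Real.sqrt (1 - Real.exp (-t)) : ℝ) : ℂ) * p.2 j)
    ((uniformFin N).prod (Measure.pi fun _ : Fin N => stdCplxGaussian))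

/-- The `i`-th entry (`0`-indexed) of a vector in `ℂ^N`, extended by `0`. -/
def entryV {N : ℕ} (u : Fin N → ℂ) (i : ℕ) : ℂ :=
  if h : i < N then u ⟨i, h⟩ else 0


def γR : Measure ℝ := gaussianReal 0 (1/2)

instance : IsProbabilityMeasure γR := by unfold γR; infer_instance

def XM (p : ℕ) : ℝ := ∫ x, x ^ p ∂γR

def dens : ℝ → ℝ≥0 := fun x => ((√π)⁻¹ * rexp (-x^2)).toNNReal

lemma dens_meas : Measurable dens := by
  apply Measurable.real_toNNReal (f := fun x : ℝ => (√π)⁻¹ * rexp (-x^2))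
  fun_prop

lemma gammaR_eq : γR = MeasureTheory.volume.withDensity (fun x => (dens x : ℝ≥0∞)) := by
  rw [γR, gaussianReal_of_var_ne_zero _ (by norm_num)]
  congr 1
  funext x
  rw [gaussianPDF_def]
  simp only [dens, ENNReal.ofReal]
  congr 2
  rw [gaussianPDFReal_def]
  norm_num
  have h2 : (√2 : ℝ) ≠ 0 := by positivity
  field_simp

lemma integral_gammaR (f : ℝ → ℝ) :
    ∫ x, f x ∂γR = ∫ x, (√π)⁻¹ * rexp (-x^2) * f x := by
  rw [gammaR_eq, integral_withDensity_eq_integral_smul dens_meas]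
  congr 1; funext x
  simp only [dens]
  rw [NNReal.smul_def, Real.coe_toNNReal _ (by positivity), smul_eq_mul]

lemma integrable_gammaR_iff (f : ℝ → ℝ) :
    Integrable f γR ↔ Integrable (fun x => (√π)⁻¹ * rexp (-x^2) * f x) := by
  rw [gammaR_eq, integrable_withDensity_iff_integrable_smul dens_meas]
  have key : ∀ x : ℝ, dens x • f x = (√π)⁻¹ * rexp (-x ^ 2) * f x := by
    intro x
    simp only [dens]
    rw [NNReal.smul_def, Real.coe_toNNReal _ (by positivity), smul_eq_mul]
  constructor
  · intro h; exact h.congr (by filter_upwards with x; rw [key])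
  · intro h; exact h.congr (by filter_upwards with x; rw [key])

lemma integrable_pow_exp (q : ℕ) : Integrable (fun x : ℝ => x ^ q * rexp (-x^2)) := by
  have := integrable_rpow_mul_exp_neg_mul_sq (b := 1) one_pos
    (s := (q : ℝ)) (by exact_mod_cast neg_one_lt_zero.trans_le (Nat.cast_nonneg q))
  simpa [Real.rpow_natCast] using this

lemma integrable_pow_gammaR (q : ℕ) : Integrable (fun x : ℝ => x ^ q) γR := by
  rw [integrable_gammaR_iff]
  apply ((integrable_pow_exp q).const_mul ((√π)⁻¹)).congr
  filter_upwards with x; ring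

lemma XM_zero : XM 0 = 1 := by simp [XM]

lemma XM_odd (p : ℕ) (hp : Odd p) : XM p = 0 := by
  have hmap : Measure.map (fun x : ℝ => -1 * x) γR = γR := by
    rw [γR, gaussianReal_map_const_mul (-1)]
    norm_num
  have h := integral_map_of_stronglyMeasurable (φ := fun x : ℝ => -1*x) (μ := γR)
    (by fun_prop) (f := fun x : ℝ => x ^ p)
    ((by fun_prop : Measurable fun x : ℝ => x ^ p).stronglyMeasurable)
  rw [hmap] at h
  have h2 : XM p = - XM p := by
    calc XM p = ∫ x, (-1 * x) ^ p ∂γR := h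
    _ = ∫ x, -(x ^ p) ∂γR := by
        congr 1; funext x; rw [mul_pow, hp.neg_one_pow]; ring
    _ = - XM p := by rw [integral_neg]; rfl
  linarith

lemma XM_two : XM 2 = 1/2 := by
  have h1 : ∫ x : ℝ, x^2 * rexp (-x^2) = 2 * ∫ x in Set.Ioi (0:ℝ), x^2 * rexp (-x^2) := by
    rw [← integral_comp_abs (f := fun u => u^2 * rexp (-u^2))]
    congr 1; funext x; rw [sq_abs]
  have h2 : ∫ x in Set.Ioi (0:ℝ), x^2 * rexp (-x^2) = √π / 4 := by
    have := integral_rpow_mul_exp_neg_mul_rpow (p := 2) (q := 2) (b := 1)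
      two_pos (by norm_num) one_pos
    rw [show ((2:ℝ) + 1)/2 = 1/2 + 1 by norm_num, Real.Gamma_add_one (by norm_num),
      Real.Gamma_one_half_eq] at this
    have heq : ∀ x : ℝ, x ^ (2:ℝ) * rexp (-1 * x ^ (2:ℝ)) = x^2 * rexp (-x^2) := by
      intro x
      rw [show (2:ℝ) = ((2:ℕ):ℝ) by norm_num, Real.rpow_natCast]
      norm_num
    simp only [heq] at this
    rw [this]
    norm_num
    ring
  rw [XM, integral_gammaR]
  rw [show (fun x : ℝ => (√π)⁻¹ * rexp (-x^2) * x^2)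
      = fun x : ℝ => (√π)⁻¹ * (x^2 * rexp (-x^2)) by funext x; ring,
    integral_const_mul, h1, h2]
  rw [inv_mul_eq_div, div_eq_iff (by positivity : √π ≠ 0)]
  ring

lemma mC_meas : Measurable (fun p : ℝ × ℝ => (p.1 : ℂ) + (p.2 : ℂ) * Complex.I) := by fun_prop

lemma γC_eq : stdCplxGaussian
    = Measure.map (fun p : ℝ × ℝ => (p.1 : ℂ) + (p.2 : ℂ) * Complex.I) (γR.prod γR) := rfl

instance : IsProbabilityMeasure stdCplxGaussian := by
  rw [γC_eq]; exact Measure.isProbabilityMeasure_map mC_meas.aemeasurable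

section T
variable (t : ℝ)

def bb : ℝ := √(1 - rexp (-t))

lemma integrable_affine (u v : ℝ) (M : ℕ) : Integrable (fun x => (u + v*x) ^ M) γR := by
  have h : (fun x : ℝ => (u + v*x)^M)
      = fun x => ∑ j ∈ Finset.range (M+1), (u^j * v^(M-j) * (M.choose j)) * x^(M-j) := by
    funext x; rw [add_pow]
    refine Finset.sum_congr rfl fun j _ => ?_
    rw [mul_pow]; ring
  rw [h]
  apply integrable_finset_sum
  intro j _
  exact (integrable_pow_gammaR _).const_mul _

lemma integral_affine (u v : ℝ) (M : ℕ) :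
    ∫ x, (u + v*x)^M ∂γR
      = ∑ j ∈ Finset.range (M+1), u^j * v^(M-j) * (M.choose j) * XM (M-j) := by
  have h : (fun x : ℝ => (u + v*x)^M)
      = fun x => ∑ j ∈ Finset.range (M+1), (u^j * v^(M-j) * (M.choose j)) * x^(M-j) := by
    funext x; rw [add_pow]
    refine Finset.sum_congr rfl fun j _ => ?_
    rw [mul_pow]; ring
  rw [h, integral_finset_sum _ (fun j _ => (integrable_pow_gammaR _).const_mul _)]
  refine Finset.sum_congr rfl fun j _ => ?_
  rw [integral_const_mul]
  rfl

lemma integral_scale (v : ℝ) (M : ℕ) : ∫ x, (v*x)^M ∂γR = v^M * XM M := by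
  simp_rw [mul_pow]
  rw [integral_const_mul]; rfl

def DD (m' r : ℕ) : ℝ := (bb t)^(2*(m'-r)) * ((2*m').choose (2*r)) * XM (2*(m'-r))

lemma DD_top (m' : ℕ) : DD t m' m' = 1 := by
  simp [DD, XM_zero]

lemma B1 (m' : ℕ) (w : ℝ) (hw : 0 ≤ w) :
    ∫ x, (√w + bb t * x)^(2*m') ∂γR
      = ∑ r ∈ Finset.range (m'+1), DD t m' r * w^r := by
  rw [integral_affine]
  have hsub : (Finset.range (m'+1)).image (fun r => 2*r) ⊆ Finset.range (2*m'+1) := by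
    intro j hj
    simp only [Finset.mem_image, Finset.mem_range] at hj ⊢
    obtain ⟨r, hr, rfl⟩ := hj; omega
  calc ∑ j ∈ Finset.range (2*m'+1), (√w)^j * (bb t)^(2*m'-j) * ((2*m').choose j) * XM (2*m'-j)
      = ∑ j ∈ (Finset.range (m'+1)).image (fun r => 2*r),
          (√w)^j * (bb t)^(2*m'-j) * ((2*m').choose j) * XM (2*m'-j) := by
        refine (Finset.sum_subset hsub ?_).symm
        intro j hj hj2
        simp only [Finset.mem_image, Finset.mem_range] at hj hj2
        have hodd : Odd j := by
          rcases Nat.even_or_odd j with he | ho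
          · obtain ⟨r, hr⟩ := he
            exact absurd ⟨r, by omega, by omega⟩ hj2
          · exact ho
        rw [XM_odd _ (Nat.Even.sub_odd (by omega) (even_two_mul m') hodd), mul_zero]
    _ = ∑ r ∈ Finset.range (m'+1),
          (√w)^(2*r) * (bb t)^(2*m'-2*r) * ((2*m').choose (2*r)) * XM (2*m'-2*r) :=
        Finset.sum_image (by intro x _ y _ h; have h' : 2*x = 2*y := h; omega)
    _ = ∑ r ∈ Finset.range (m'+1), DD t m' r * w^r := by
        refine Finset.sum_congr rfl fun r hr => ?_
        simp only [Finset.mem_range] at hr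
        rw [show 2*m' - 2*r = 2*(m'-r) by omega, DD, pow_mul, Real.sq_sqrt hw]
        ring

def φf (m : ℕ) (c : ℝ) : ℝ :=
  ∫ z, ‖(c:ℂ) + ((bb t : ℝ):ℂ) * z‖ ^ (2*m) ∂stdCplxGaussian

lemma norm_expand (c : ℝ) (m : ℕ) (z : ℂ) :
    ‖(c:ℂ) + ((bb t : ℝ):ℂ)*z‖^(2*m) = ((c + bb t * z.re)^2 + (bb t * z.im)^2)^m := by
  rw [pow_mul]
  congr 1
  rw [Complex.sq_norm, Complex.normSq_apply]
  simp only [Complex.add_re, Complex.add_im, Complex.ofReal_re, Complex.ofReal_im,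
    Complex.mul_re, Complex.mul_im]
  ring

lemma phi_term_integrable (c : ℝ) (m m' : ℕ) :
    Integrable (fun p : ℝ × ℝ => (c + bb t * p.1)^(2*m') * (bb t * p.2)^(2*(m-m'))
      * ((m.choose m' : ℕ) : ℝ)) (γR.prod γR) := by
  apply Integrable.mul_const
  have h1 := integrable_affine (c) (bb t) (2*m')
  have h2 := integrable_affine 0 (bb t) (2*(m-m'))
  simp only [zero_add] at h2
  exact h1.mul_prod h2

lemma sq_add_expand (A B : ℝ) (m : ℕ) :
    (A^2 + B^2)^m = ∑ m' ∈ Finset.range (m+1),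
      A^(2*m') * B^(2*(m-m')) * ((m.choose m' : ℕ) : ℝ) := by
  rw [add_pow]
  refine Finset.sum_congr rfl fun m' hm' => ?_
  rw [← pow_mul, ← pow_mul]

lemma phi_expand (c : ℝ) (m : ℕ) :
    (fun p : ℝ × ℝ => ‖(c:ℂ) + ((bb t : ℝ):ℂ) * ((p.1 : ℂ) + (p.2 : ℂ) * Complex.I)‖ ^ (2*m))
    = fun p => ∑ m' ∈ Finset.range (m+1),
        (c + bb t * p.1)^(2*m') * (bb t * p.2)^(2*(m-m')) * ((m.choose m' : ℕ) : ℝ) := by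
  funext p
  rw [norm_expand]
  have hre : ((p.1 : ℂ) + (p.2 : ℂ) * Complex.I).re = p.1 := by simp
  have him : ((p.1 : ℂ) + (p.2 : ℂ) * Complex.I).im = p.2 := by simp
  rw [hre, him, sq_add_expand]

lemma integrable_phi (m : ℕ) (c : ℝ) :
    Integrable (fun z : ℂ => ‖(c:ℂ) + ((bb t : ℝ):ℂ) * z‖ ^ (2*m)) stdCplxGaussian := by
  rw [γC_eq, integrable_map_measure
    ((by fun_prop : Measurable fun z : ℂ => ‖(c:ℂ) + ((bb t : ℝ):ℂ) * z‖ ^ (2*m)).aestronglyMeasurable)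
    mC_meas.aemeasurable]
  show Integrable ((fun z : ℂ => ‖(c:ℂ) + ((bb t : ℝ):ℂ) * z‖ ^ (2*m)) ∘ _) _
  rw [Function.comp_def]
  rw [phi_expand]
  exact integrable_finset_sum _ (fun m' _ => phi_term_integrable t c m m')

lemma phi_eq (m : ℕ) (w : ℝ) (hw : 0 ≤ w) :
    φf t m (√w) = ∑ m' ∈ Finset.range (m+1),
      ((m.choose m' : ℕ) : ℝ) * ((bb t)^(2*(m-m')) * XM (2*(m-m')))
        * ∑ r ∈ Finset.range (m'+1), DD t m' r * w^r := by
  rw [φf, γC_eq, integral_map_of_stronglyMeasurable mC_meas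
    (by fun_prop : Measurable fun z : ℂ => ‖((√w : ℝ):ℂ) + ((bb t : ℝ):ℂ) * z‖ ^ (2*m)).stronglyMeasurable]
  rw [show (fun p : ℝ × ℝ => ‖(√w:ℂ) + ((bb t : ℝ):ℂ) * ((p.1 : ℂ) + (p.2 : ℂ) * Complex.I)‖ ^ (2*m)) = _ from phi_expand t (√w) m]
  rw [integral_finset_sum _ (fun m' _ => phi_term_integrable t (√w) m m')]
  refine Finset.sum_congr rfl fun m' hm' => ?_
  have : ∀ p : ℝ × ℝ, (√w + bb t * p.1)^(2*m') * (bb t * p.2)^(2*(m-m')) * ((m.choose m' : ℕ) : ℝ)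
      = ((m.choose m' : ℕ) : ℝ) * ((fun x => (√w + bb t * x)^(2*m')) p.1 * (fun y => (bb t * y)^(2*(m-m'))) p.2) := by
    intro p; ring
  simp_rw [this]
  rw [integral_const_mul]
  rw [show (∫ a : ℝ × ℝ, (√w + bb t * a.1)^(2*m') * (bb t * a.2)^(2*(m-m')) ∂γR.prod γR)
      = (∫ x, (√w + bb t * x)^(2*m') ∂γR) * ∫ y, (bb t * y)^(2*(m-m')) ∂γR from
    integral_prod_mul (f := fun x => (√w + bb t * x)^(2*m')) (g := fun y => (bb t * y)^(2*(m-m')))]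
  rw [B1 t m' w hw, integral_scale]
  ring

def ββ (m r : ℕ) : ℝ := ∑ m' ∈ Finset.range (m+1),
  ((m.choose m' : ℕ) : ℝ) * ((bb t)^(2*(m-m')) * XM (2*(m-m')))
    * (if r ≤ m' then DD t m' r else 0)

lemma phi_poly (m : ℕ) (w : ℝ) (hw : 0 ≤ w) :
    φf t m (√w) = ∑ r ∈ Finset.range (m+1), ββ t m r * w^r := by
  rw [phi_eq t m w hw]
  have inner : ∀ m' ∈ Finset.range (m+1),
      ∑ r ∈ Finset.range (m'+1), DD t m' r * w^r
      = ∑ r ∈ Finset.range (m+1), (if r ≤ m' then DD t m' r else 0) * w^r := by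
    intro m' hm'
    simp only [Finset.mem_range] at hm'
    calc ∑ r ∈ Finset.range (m'+1), DD t m' r * w^r
        = ∑ r ∈ Finset.range (m'+1), (if r ≤ m' then DD t m' r else 0) * w^r := by
          refine Finset.sum_congr rfl fun r hr => ?_
          simp only [Finset.mem_range] at hr
          rw [if_pos (by omega)]
      _ = ∑ r ∈ Finset.range (m+1), (if r ≤ m' then DD t m' r else 0) * w^r := by
          refine Finset.sum_subset (Finset.range_subset_range.2 (by omega)) ?_
          intro r hr hr2
          simp only [Finset.mem_range] at hr hr2
          rw [if_neg (by omega), zero_mul]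
  calc ∑ m' ∈ Finset.range (m+1), ((m.choose m' : ℕ) : ℝ)
          * ((bb t)^(2*(m-m')) * XM (2*(m-m'))) * ∑ r ∈ Finset.range (m'+1), DD t m' r * w^r
      = ∑ m' ∈ Finset.range (m+1), ∑ r ∈ Finset.range (m+1),
          ((m.choose m' : ℕ) : ℝ) * ((bb t)^(2*(m-m')) * XM (2*(m-m')))
            * ((if r ≤ m' then DD t m' r else 0) * w^r) := by
        refine Finset.sum_congr rfl fun m' hm' => ?_
        rw [inner m' hm', Finset.mul_sum]
    _ = ∑ r ∈ Finset.range (m+1), ∑ m' ∈ Finset.range (m+1),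
          ((m.choose m' : ℕ) : ℝ) * ((bb t)^(2*(m-m')) * XM (2*(m-m')))
            * ((if r ≤ m' then DD t m' r else 0) * w^r) := Finset.sum_comm
    _ = ∑ r ∈ Finset.range (m+1), ββ t m r * w^r := by
        refine Finset.sum_congr rfl fun r hr => ?_
        rw [ββ, Finset.sum_mul]
        refine Finset.sum_congr rfl fun m' hm' => ?_
        ring

lemma ββ_top (m : ℕ) : ββ t m m = 1 := by
  rw [ββ, Finset.sum_eq_single m]
  · simp [DD_top, XM_zero]
  · intro m' hm' hne
    simp only [Finset.mem_range] at hm'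
    rw [if_neg (by omega)]
    ring
  · intro h; exact absurd (Finset.self_mem_range_succ m) h

lemma phi_zero_eq (m : ℕ) : φf t m 0 = ββ t m 0 := by
  have h := phi_poly t m 0 le_rfl
  rw [Real.sqrt_zero] at h
  rw [h, Finset.sum_eq_single 0]
  · simp
  · intro r hr hne; rw [zero_pow hne]; ring
  · intro h; exact absurd (Finset.mem_range.2 (by omega)) h

lemma bb_sq (ht : 0 ≤ t) : (bb t)^2 = 1 - rexp (-t) := by
  rw [bb, Real.sq_sqrt]
  have : rexp (-t) ≤ 1 := Real.exp_le_one_iff.2 (by linarith)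
  linarith

lemma phi_one_zero (ht : 0 ≤ t) : φf t 1 0 = 1 - rexp (-t) := by
  rw [phi_zero_eq, ββ]
  rw [Finset.sum_range_succ, Finset.sum_range_succ, Finset.sum_range_zero]
  simp [DD, XM_zero, XM_two]
  rw [← bb_sq t ht]
  ring


end T

section main
variable (t : ℝ) (k N : ℕ) (n : Fin k → ℕ)

lemma measurable_entry (i : ℕ) : Measurable (fun u : Fin N → ℂ => entryV u i) := by
  unfold entryV
  by_cases h : i < N
  · simp only [dif_pos h]; exact measurable_pi_apply _
  · simp only [dif_neg h]; exact measurable_const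

lemma measurable_F :
    Measurable (fun u : Fin N → ℂ => ∏ j : Fin k, ‖entryV u (j:ℕ)‖ ^ (2 * n j)) := by
  apply Finset.measurable_prod
  intro j _
  exact ((measurable_entry N (j:ℕ)).norm).pow_const _

lemma measurable_T :
    Measurable (fun p : Fin N × (Fin N → ℂ) => fun j =>
      ((Real.exp (-t / 2) * Real.sqrt N : ℝ) : ℂ) * (if j = p.1 then 1 else 0) +
        ((Real.sqrt (1 - Real.exp (-t)) : ℝ) : ℂ) * p.2 j) := by
  apply measurable_pi_lambda
  intro j
  apply Measurable.add
  · apply Measurable.const_mul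
    have : Measurable fun i : Fin N => (if j = i then (1:ℂ) else 0) := Measurable.of_discrete
    exact this.comp measurable_fst
  · exact ((measurable_pi_apply j).comp measurable_snd).const_mul _

lemma measurable_FT :
    Measurable (fun p : Fin N × (Fin N → ℂ) => ∏ j : Fin k,
      ‖entryV (fun j' : Fin N =>
        ((Real.exp (-t / 2) * Real.sqrt N : ℝ) : ℂ) * (if j' = p.1 then 1 else 0) +
        ((Real.sqrt (1 - Real.exp (-t)) : ℝ) : ℂ) * p.2 j') (j:ℕ)‖ ^ (2 * n j)) :=
  (measurable_F k N n).comp (measurable_T t N)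

/-- decomposition of the product measure -/
lemma prod_decomp :
    (uniformFin N).prod (Measure.pi fun _ : Fin N => stdCplxGaussian)
      = (N : ℝ≥0∞)⁻¹ • Measure.sum (fun i : Fin N =>
          Measure.map (Prod.mk i) (Measure.pi fun _ : Fin N => stdCplxGaussian)) := by
  set ν := Measure.pi fun _ : Fin N => stdCplxGaussian with hν
  have hsmul : ∀ (c : ℝ≥0∞) (μ : Measure (Fin N)), (c • μ).prod ν = c • (μ.prod ν) := by
    intro c μ
    ext s hs
    rw [Measure.prod_apply hs, Measure.smul_apply, smul_eq_mul, lintegral_smul_measure, smul_eq_mul,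
      Measure.prod_apply hs]
  rw [uniformFin, ← Measure.sum_fintype, hsmul, Measure.prod_sum_left]
  refine congrArg _ (congrArg Measure.sum (funext fun i => ?_))
  rw [Measure.dirac_prod]

lemma integral_formula (hkN : k ≤ N) :
    ∫ u, ∏ j : Fin k, ‖entryV u (j:ℕ)‖ ^ (2 * n j) ∂(gaussModelLaw t N)
    = (N : ℝ)⁻¹ *
      ((∑ j₀ : Fin k, φf t (n j₀) (rexp (-t/2) * √N)
          * ∏ j ∈ Finset.univ.erase j₀, φf t (n j) 0)
        + ((N : ℝ) - k) * ∏ j : Fin k, φf t (n j) 0) := by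
  letI : MeasureSpace ℂ := ⟨stdCplxGaussian⟩
  haveI : SigmaFinite (volume : Measure ℂ) := by
    show SigmaFinite stdCplxGaussian; infer_instance
  set ν := Measure.pi fun _ : Fin N => stdCplxGaussian with hν
  set aN : ℝ := rexp (-t/2) * √N with haN
  set emb : Fin k → Fin N := Fin.castLE hkN with hemb
  -- the one-coordinate factors
  set FF : Fin N → Fin N → ℂ → ℝ := fun i l z =>
    if h : (l:ℕ) < k then ‖((aN:ℝ):ℂ) * (if l = i then 1 else 0) + ((bb t : ℝ):ℂ) * z‖ ^ (2 * n ⟨(l:ℕ), h⟩)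
    else 1 with hFF
  have hFFeq : ∀ i l z, FF i l z
      = if h : (l:ℕ) < k then
          ‖(((if l = i then aN else 0) : ℝ):ℂ) + ((bb t : ℝ):ℂ) * z‖ ^ (2 * n ⟨(l:ℕ), h⟩)
        else 1 := by
    intro i l z
    simp only [hFF]
    by_cases h : (l:ℕ) < k
    · rw [dif_pos h, dif_pos h]
      by_cases hi : l = i
      · rw [if_pos hi, if_pos hi, mul_one]
      · rw [if_neg hi, if_neg hi, mul_zero]
        norm_num
    · rw [dif_neg h, dif_neg h]
  have hFFint : ∀ i l, Integrable (FF i l) stdCplxGaussian := by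
    intro i l
    have : FF i l = fun z =>
        if h : (l:ℕ) < k then
          ‖(((if l = i then aN else 0) : ℝ):ℂ) + ((bb t : ℝ):ℂ) * z‖ ^ (2 * n ⟨(l:ℕ), h⟩)
        else 1 := by funext z; exact hFFeq i l z
    rw [this]
    by_cases h : (l:ℕ) < k
    · simp only [dif_pos h]; exact integrable_phi t _ _
    · simp only [dif_neg h]; exact integrable_const 1
  -- pointwise product identity
  have hprod : ∀ (i : Fin N) (g : Fin N → ℂ),
      (∏ j : Fin k, ‖entryV (fun j' : Fin N =>
          ((aN:ℝ):ℂ) * (if j' = i then 1 else 0) + ((bb t : ℝ):ℂ) * g j') (j:ℕ)‖ ^ (2 * n j))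
      = ∏ l : Fin N, FF i l (g l) := by
    intro i g
    set H : ℕ → ℝ := fun m =>
      if hm : m < N then FF i ⟨m, hm⟩ (g ⟨m, hm⟩) else 1 with hH
    have h1 : ∏ l : Fin N, FF i l (g l) = ∏ m ∈ Finset.range N, H m := by
      rw [← Fin.prod_univ_eq_prod_range]
      refine Finset.prod_congr rfl fun l _ => ?_
      rw [hH]; simp only [dif_pos l.isLt, Fin.eta]
    have h2 : ∏ m ∈ Finset.range N, H m = ∏ m ∈ Finset.range k, H m := by
      refine (Finset.prod_subset (Finset.range_subset_range.2 hkN) ?_).symm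
      intro m hm hm2
      simp only [Finset.mem_range] at hm hm2
      rw [hH]
      simp only [dif_pos hm, hFF]
      rw [dif_neg (by simpa using hm2)]
    have h3 : ∏ m ∈ Finset.range k, H m = ∏ j : Fin k, H (j:ℕ) :=
      (Fin.prod_univ_eq_prod_range H k).symm
    rw [h1, h2, h3]
    refine Finset.prod_congr rfl fun j _ => ?_
    have hjN : (j:ℕ) < N := lt_of_lt_of_le j.isLt hkN
    rw [hH]
    simp only [dif_pos hjN, hFF]
    rw [dif_pos j.isLt]
    rw [entryV]
    simp only [dif_pos hjN]
  -- per-point integral value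
  have hFFval : ∀ i l, (∫ z, FF i l z ∂stdCplxGaussian)
      = if h : (l:ℕ) < k then φf t (n ⟨(l:ℕ), h⟩) (if l = i then aN else 0) else 1 := by
    intro i l
    by_cases h : (l:ℕ) < k
    · rw [dif_pos h]
      have : ∀ z, FF i l z
          = ‖(((if l = i then aN else 0) : ℝ):ℂ) + ((bb t : ℝ):ℂ) * z‖ ^ (2 * n ⟨(l:ℕ), h⟩) := by
        intro z; rw [hFFeq i l z, dif_pos h]
      simp_rw [this]
      rfl
    · rw [dif_neg h]
      have : ∀ z, FF i l z = 1 := by intro z; rw [hFFeq i l z, dif_neg h]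
      simp_rw [this]
      simp
  -- main computation
  rw [gaussModelLaw, integral_map_of_stronglyMeasurable (measurable_T t N)
    (measurable_F k N n).stronglyMeasurable]
  rw [show ((uniformFin N).prod ν) = _ from prod_decomp N, integral_smul_measure,
    Measure.sum_fintype, integral_finset_sum_measure (by
      intro i _
      rw [integrable_map_measure (measurable_FT t k N n).aestronglyMeasurable
        measurable_prodMk_left.aemeasurable]
      have : ((fun p : Fin N × (Fin N → ℂ) => ∏ j : Fin k, ‖entryV ((fun j' : Fin N =>
          ((Real.exp (-t / 2) * Real.sqrt N : ℝ) : ℂ) * (if j' = p.1 then 1 else 0) +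
          ((Real.sqrt (1 - Real.exp (-t)) : ℝ) : ℂ) * p.2 j')) (j:ℕ)‖ ^ (2 * n j)) ∘ Prod.mk i)
          = fun g => ∏ l : Fin N, FF i l (g l) := by
        funext g
        exact hprod i g
      rw [this]
      exact Integrable.fintype_prod (f := FF i) (hFFint i))]
  have hper : ∀ i : Fin N,
      (∫ p, (∏ j : Fin k, ‖entryV ((fun j' : Fin N =>
          ((Real.exp (-t / 2) * Real.sqrt N : ℝ) : ℂ) * (if j' = p.1 then 1 else 0) +
          ((Real.sqrt (1 - Real.exp (-t)) : ℝ) : ℂ) * p.2 j')) (j:ℕ)‖ ^ (2 * n j))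
          ∂(Measure.map (Prod.mk i) ν))
      = ∏ j : Fin k, φf t (n j) (if emb j = i then aN else 0) := by
    intro i
    rw [integral_map_of_stronglyMeasurable measurable_prodMk_left
      (measurable_FT t k N n).stronglyMeasurable]
    have : (fun g : Fin N → ℂ => ∏ j : Fin k, ‖entryV ((fun j' : Fin N =>
          ((Real.exp (-t / 2) * Real.sqrt N : ℝ) : ℂ) * (if j' = (i,g).1 then 1 else 0) +
          ((Real.sqrt (1 - Real.exp (-t)) : ℝ) : ℂ) * (i,g).2 j')) (j:ℕ)‖ ^ (2 * n j))
        = fun g => ∏ l : Fin N, FF i l (g l) := by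
      funext g
      exact hprod i g
    rw [this]
    have key : ∫ g : Fin N → ℂ, ∏ l : Fin N, FF i l (g l) = ∏ l, ∫ z, FF i l z :=
      integral_fintype_prod_eq_prod (𝕜 := ℝ) (ι := Fin N) (FF i)
    rw [show (∫ g, ∏ l : Fin N, FF i l (g l) ∂ν) = ∏ l, ∫ z, FF i l z ∂stdCplxGaussian from key]
    -- now reduce product over Fin N to product over Fin k
    set G : ℕ → ℝ := fun m => if hm : m < N then ∫ z, FF i ⟨m, hm⟩ z ∂stdCplxGaussian else 1 with hG
    have g1 : ∏ l : Fin N, ∫ z, FF i l z ∂stdCplxGaussian = ∏ m ∈ Finset.range N, G m := by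
      rw [← Fin.prod_univ_eq_prod_range]
      exact Finset.prod_congr rfl fun l _ => by rw [hG]; simp only [dif_pos l.isLt, Fin.eta]
    have g2 : ∏ m ∈ Finset.range N, G m = ∏ m ∈ Finset.range k, G m := by
      refine (Finset.prod_subset (Finset.range_subset_range.2 hkN) ?_).symm
      intro m hm hm2
      simp only [Finset.mem_range] at hm hm2
      rw [hG]
      simp only [dif_pos hm]
      rw [hFFval]
      rw [dif_neg (by simpa using hm2)]
    have g3 : ∏ m ∈ Finset.range k, G m = ∏ j : Fin k, G (j:ℕ) :=
      (Fin.prod_univ_eq_prod_range G k).symm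
    rw [g1, g2, g3]
    refine Finset.prod_congr rfl fun j _ => ?_
    have hjN : (j:ℕ) < N := lt_of_lt_of_le j.isLt hkN
    rw [hG]
    simp only [dif_pos hjN]
    rw [hFFval]
    simp only [dif_pos j.isLt, Fin.eta]
    rfl
  rw [Finset.sum_congr rfl (fun i _ => hper i)]
  -- split the sum over i
  have himg : (Finset.univ.image emb) ⊆ Finset.univ := Finset.subset_univ _
  have hsplit : ∑ i : Fin N, ∏ j : Fin k, φf t (n j) (if emb j = i then aN else 0)
      = (∑ i ∈ Finset.univ \ Finset.univ.image emb,
          ∏ j : Fin k, φf t (n j) (if emb j = i then aN else 0))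
        + ∑ i ∈ Finset.univ.image emb,
            ∏ j : Fin k, φf t (n j) (if emb j = i then aN else 0) :=
    (Finset.sum_sdiff himg).symm
  have hinj : Function.Injective emb := Fin.castLE_injective hkN
  have houtside : ∀ i ∈ Finset.univ \ Finset.univ.image emb,
      (∏ j : Fin k, φf t (n j) (if emb j = i then aN else 0)) = ∏ j : Fin k, φf t (n j) 0 := by
    intro i hi
    simp only [Finset.mem_sdiff, Finset.mem_image] at hi
    refine Finset.prod_congr rfl fun j _ => ?_
    rw [if_neg (fun hc => hi.2 ⟨j, Finset.mem_univ j, hc⟩)]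
  have hcard : (Finset.univ \ Finset.univ.image emb).card = N - k := by
    rw [Finset.card_sdiff_of_subset himg, Finset.card_univ, Finset.card_image_of_injective _ hinj,
      Finset.card_univ, Fintype.card_fin, Fintype.card_fin]
  have hin : ∑ i ∈ Finset.univ.image emb, ∏ j : Fin k, φf t (n j) (if emb j = i then aN else 0)
      = ∑ j₀ : Fin k, φf t (n j₀) aN * ∏ j ∈ Finset.univ.erase j₀, φf t (n j) 0 := by
    rw [Finset.sum_image (fun x _ y _ h => hinj h)]
    refine Finset.sum_congr rfl fun j₀ _ => ?_
    rw [← Finset.mul_prod_erase Finset.univ _ (Finset.mem_univ j₀)]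
    rw [if_pos rfl]
    congr 1
    refine Finset.prod_congr rfl fun j hj => ?_
    rw [if_neg (fun hc => (Finset.mem_erase.1 hj).1 (hinj hc))]
  rw [hsplit, hin, Finset.sum_congr rfl houtside, Finset.sum_const, hcard]
  rw [nsmul_eq_mul, Nat.cast_sub hkN]
  rw [smul_eq_mul, ENNReal.toReal_inv, ENNReal.toReal_natCast]
  ring

end main

-- limit helpers
lemma tendsto_zpow_nat_zero (E : ℤ) (hE : E < 0) :
    Tendsto (fun N : ℕ => ((N:ℝ))^E) atTop (𝓝 0) :=
  (tendsto_zpow_atTop_zero hE).comp tendsto_natCast_atTop_atTop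

lemma tend_CE (C : ℝ) (E : ℤ) (hE : E ≤ 0) :
    Tendsto (fun N : ℕ => C * (N:ℝ)^E) atTop (𝓝 (if E = 0 then C else 0)) := by
  rcases hE.lt_or_eq with hneg | h0
  · rw [if_neg hneg.ne]
    simpa using (tendsto_zpow_nat_zero E hneg).const_mul C
  · rw [if_pos h0, h0]
    simp only [zpow_zero, mul_one]
    exact tendsto_const_nhds

lemma sqrtexp (t : ℝ) : √(rexp (-t)) = rexp (-t/2) := by
  rw [show rexp (-t) = (rexp (-t/2))^2 by
    rw [pow_two, ← Real.exp_add]; ring_nf]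
  exact Real.sqrt_sq (Real.exp_pos _).le

theorem master (t : ℝ) (ht : 0 ≤ t) (k : ℕ) (hk : 1 ≤ k)
    (n : Fin k → ℕ) (hn : ∀ j, 1 ≤ n j) :
    Tendsto (fun N : ℕ => (N : ℝ) ^ ((k : ℤ) - ∑ j, (n j : ℤ)) *
        ∫ u, ∏ j : Fin k, ‖entryV u (j : ℕ)‖ ^ (2 * n j) ∂(gaussModelLaw t N)) atTop
      (𝓝 ((∑ j₀ : Fin k, ∑ r ∈ Finset.range (n j₀ + 1),
          (if ((k : ℤ) - ∑ j, (n j : ℤ)) - 1 + (r:ℤ) = 0 then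
            ββ t (n j₀) r * (rexp (-t))^r * ∏ j ∈ Finset.univ.erase j₀, φf t (n j) 0
          else 0))
        + ((if ((k : ℤ) - ∑ j, (n j : ℤ)) - 1 + ((1:ℕ):ℤ) = 0 then
              ∏ j : Fin k, φf t (n j) 0 else 0)
          - (if ((k : ℤ) - ∑ j, (n j : ℤ)) - 1 + ((0:ℕ):ℤ) = 0 then
              (k:ℝ) * ∏ j : Fin k, φf t (n j) 0 else 0)))) := by
  set s : ℝ := rexp (-t) with hs
  set z : ℤ := (k : ℤ) - ∑ j, (n j : ℤ) with hz
  set P : ℝ := ∏ j : Fin k, φf t (n j) 0 with hP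
  set Pe : Fin k → ℝ := fun j₀ => ∏ j ∈ Finset.univ.erase j₀, φf t (n j) 0 with hPe
  have hz0 : z ≤ 0 := by
    rw [hz]
    have : (k:ℤ) ≤ ∑ j, (n j : ℤ) := by
      calc (k:ℤ) = ∑ _j : Fin k, (1:ℤ) := by simp
      _ ≤ ∑ j, (n j : ℤ) := Finset.sum_le_sum (fun j _ => by exact_mod_cast hn j)
    omega
  -- the explicit eventual formula
  set expr2 : ℕ → ℝ := fun N =>
    (∑ j₀ : Fin k, ∑ r ∈ Finset.range (n j₀ + 1),
      (ββ t (n j₀) r * s^r * Pe j₀) * (N:ℝ)^(z - 1 + (r:ℤ)))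
    + (P * (N:ℝ)^(z - 1 + ((1:ℕ):ℤ)) - (k:ℝ)*P*(N:ℝ)^(z - 1 + ((0:ℕ):ℤ))) with hexpr2
  have hev : ∀ᶠ N : ℕ in atTop, (N : ℝ) ^ z *
      (∫ u, ∏ j : Fin k, ‖entryV u (j : ℕ)‖ ^ (2 * n j) ∂(gaussModelLaw t N)) = expr2 N := by
    filter_upwards [eventually_ge_atTop k, eventually_ge_atTop 1] with N hkN h1N
    have hN0 : (N:ℝ) ≠ 0 := Nat.cast_ne_zero.2 (by omega)
    rw [integral_formula t k N n hkN]
    have hA : rexp (-t/2) * √(N:ℝ) = √(s * N) := by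
      rw [Real.sqrt_mul (Real.exp_pos _).le, sqrtexp]
    have hphi : ∀ j₀ : Fin k, φf t (n j₀) (rexp (-t/2) * √(N:ℝ))
        = ∑ r ∈ Finset.range (n j₀ + 1), ββ t (n j₀) r * (s^r * (N:ℝ)^r) := by
      intro j₀
      rw [hA, phi_poly t (n j₀) (s * N) (by positivity)]
      exact Finset.sum_congr rfl fun r _ => by rw [mul_pow]
    simp only [hphi]
    have hzpow : ∀ r : ℕ, (N:ℝ)^(z - 1 + (r:ℤ)) = (N:ℝ)^z * (N:ℝ)⁻¹ * (N:ℝ)^r := by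
      intro r
      rw [show z - 1 + (r:ℤ) = z + (-1) + (r:ℤ) by ring, zpow_add₀ hN0, zpow_add₀ hN0,
        _root_.zpow_neg_one, zpow_natCast]
    rw [hexpr2]
    simp only [hzpow, Finset.sum_mul, Finset.mul_sum, mul_add, mul_sub]
    congr 1
    · exact Finset.sum_congr rfl fun j₀ _ => Finset.sum_congr rfl fun r _ => by ring
    · ring
  refine Tendsto.congr' (by filter_upwards [hev] with N h using h.symm) ?_
  rw [hexpr2]
  refine Tendsto.add ?_ (Tendsto.sub ?_ ?_)
  · refine tendsto_finset_sum _ fun j₀ _ => ?_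
    refine tendsto_finset_sum _ fun r hr => ?_
    have hE : z - 1 + (r:ℤ) ≤ 0 := by
      simp only [Finset.mem_range] at hr
      have h1 : (r:ℤ) ≤ (n j₀ : ℤ) := by exact_mod_cast Nat.lt_succ_iff.1 hr
      have h2 : (n j₀ : ℤ) + ((k:ℤ) - 1) ≤ ∑ j, (n j : ℤ) := by
        rw [← Finset.add_sum_erase Finset.univ (fun j => ((n j : ℤ))) (Finset.mem_univ j₀)]
        have hcard : ((k:ℤ) - 1) = ∑ _j ∈ Finset.univ.erase j₀, (1:ℤ) := by
          rw [Finset.sum_const, Finset.card_erase_of_mem (Finset.mem_univ j₀),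
            Finset.card_univ, Fintype.card_fin, nsmul_eq_mul, mul_one, Nat.cast_sub hk]
          norm_num
        have hge : ((k:ℤ) - 1) ≤ ∑ j ∈ Finset.univ.erase j₀, (n j : ℤ) := by
          rw [hcard]
          exact Finset.sum_le_sum fun j _ => by exact_mod_cast hn j
        omega
      omega
    exact tend_CE _ _ hE
  · exact tend_CE P (z - 1 + ((1:ℕ):ℤ)) (by omega)
  · exact tend_CE ((k:ℝ)*P) (z - 1 + ((0:ℕ):ℤ)) (by omega)

theorem case1 (t : ℝ) (ht : 0 ≤ t) (k : ℕ) (hk : 1 ≤ k)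
    (n : Fin k → ℕ) (hn : ∀ j, 1 ≤ n j) (h1 : ∀ j, n j = 1) :
    Tendsto (fun N : ℕ => (N : ℝ) ^ ((k : ℤ) - ∑ j, (n j : ℤ)) *
        ∫ u, ∏ j : Fin k, ‖entryV u (j : ℕ)‖ ^ (2 * n j) ∂(gaussModelLaw t N)) atTop
      (𝓝 ((1 - Real.exp (-t)) ^ k +
          k * Real.exp (-t) * (1 - Real.exp (-t)) ^ (k - 1))) := by
  have H := master t ht k hk n hn
  convert H using 2
  have hsum : (∑ j : Fin k, (n j : ℤ)) = k := by
    simp [h1]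
  have hPe : ∀ j₀ : Fin k, (∏ j ∈ Finset.univ.erase j₀, φf t (n j) 0)
      = (1 - rexp (-t))^(k-1) := by
    intro j₀
    calc ∏ j ∈ Finset.univ.erase j₀, φf t (n j) 0
        = ∏ _j ∈ Finset.univ.erase j₀, (1 - rexp (-t)) := by
          exact Finset.prod_congr rfl fun j _ => by rw [h1 j, phi_one_zero t ht]
      _ = (1 - rexp (-t))^(k-1) := by
          rw [Finset.prod_const, Finset.card_erase_of_mem (Finset.mem_univ j₀),
            Finset.card_univ, Fintype.card_fin]
  have hP : (∏ j : Fin k, φf t (n j) 0) = (1 - rexp (-t))^k := by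
    calc ∏ j : Fin k, φf t (n j) 0 = ∏ _j : Fin k, (1 - rexp (-t)) :=
        Finset.prod_congr rfl fun j _ => by rw [h1 j, phi_one_zero t ht]
      _ = (1 - rexp (-t))^k := by rw [Finset.prod_const, Finset.card_univ, Fintype.card_fin]
  rw [hsum]
  have hinner : ∀ j₀ : Fin k, (∑ r ∈ Finset.range (n j₀ + 1),
      (if ((k : ℤ) - (k:ℤ)) - 1 + (r:ℤ) = 0 then
        ββ t (n j₀) r * (rexp (-t))^r * ∏ j ∈ Finset.univ.erase j₀, φf t (n j) 0
      else 0)) = rexp (-t) * (1 - rexp (-t))^(k-1) := by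
    intro j₀
    rw [h1 j₀]
    rw [Finset.sum_range_succ, Finset.sum_range_one]
    rw [if_neg (by norm_num), if_pos (by norm_num)]
    rw [hPe j₀, ββ_top]
    ring
  rw [Finset.sum_congr rfl (fun j₀ _ => hinner j₀)]
  rw [Finset.sum_const, Finset.card_univ, Fintype.card_fin, hP]
  rw [if_pos (by norm_num), if_neg (by norm_num)]
  rw [nsmul_eq_mul]
  ring

theorem case2 (t : ℝ) (ht : 0 ≤ t) (k : ℕ) (hk : 1 ≤ k)
    (n : Fin k → ℕ) (hn : ∀ j, 1 ≤ n j) (j₀ : Fin k) (h2 : 2 ≤ n j₀)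
    (hother : ∀ j, j ≠ j₀ → n j = 1) :
    Tendsto (fun N : ℕ => (N : ℝ) ^ ((k : ℤ) - ∑ j, (n j : ℤ)) *
        ∫ u, ∏ j : Fin k, ‖entryV u (j : ℕ)‖ ^ (2 * n j) ∂(gaussModelLaw t N)) atTop
      (𝓝 (Real.exp (-(n j₀ : ℝ) * t) * (1 - Real.exp (-t)) ^ (k - 1))) := by
  have H := master t ht k hk n hn
  convert H using 2
  have hsum : (∑ j : Fin k, (n j : ℤ)) = (n j₀ : ℤ) + ((k:ℤ) - 1) := by
    rw [← Finset.add_sum_erase Finset.univ (fun j => ((n j : ℤ))) (Finset.mem_univ j₀)]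
    congr 1
    calc ∑ j ∈ Finset.univ.erase j₀, (n j : ℤ)
        = ∑ _j ∈ Finset.univ.erase j₀, (1:ℤ) := Finset.sum_congr rfl fun j hj => by
          rw [hother j (Finset.mem_erase.1 hj).1]; norm_num
      _ = (k:ℤ) - 1 := by
          rw [Finset.sum_const, Finset.card_erase_of_mem (Finset.mem_univ j₀),
            Finset.card_univ, Fintype.card_fin, nsmul_eq_mul, mul_one, Nat.cast_sub hk]
          norm_num
  have hPe : (∏ j ∈ Finset.univ.erase j₀, φf t (n j) 0) = (1 - rexp (-t))^(k-1) := by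
    calc ∏ j ∈ Finset.univ.erase j₀, φf t (n j) 0
        = ∏ _j ∈ Finset.univ.erase j₀, (1 - rexp (-t)) := Finset.prod_congr rfl fun j hj => by
          rw [hother j (Finset.mem_erase.1 hj).1, phi_one_zero t ht]
      _ = (1 - rexp (-t))^(k-1) := by
          rw [Finset.prod_const, Finset.card_erase_of_mem (Finset.mem_univ j₀),
            Finset.card_univ, Fintype.card_fin]
  rw [hsum]
  -- evaluate the double sum: only j₀, r = n j₀ survives
  rw [Finset.sum_eq_single j₀]
  · rw [Finset.sum_eq_single (n j₀)]
    · rw [if_pos (by push_cast; ring), ββ_top, hPe]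
      rw [if_neg (by omega), if_neg (by omega)]
      rw [show rexp (-(n j₀ : ℝ) * t) = (rexp (-t))^(n j₀) by
        rw [← Real.exp_nat_mul]; ring_nf]
      ring
    · intro r hr hne
      rw [if_neg (by
        simp only [Finset.mem_range] at hr
        intro hc
        apply hne
        omega)]
    · intro hmem
      exact absurd (Finset.self_mem_range_succ (n j₀)) hmem
  · intro j₁ _ hne
    refine Finset.sum_eq_zero fun r hr => ?_
    simp only [Finset.mem_range] at hr
    have hn1 : n j₁ = 1 := hother j₁ hne
    rw [if_neg (by
      have : r ≤ 1 := by omega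
      intro hc
      omega)]
  · intro hmem
    exact absurd (Finset.mem_univ j₀) hmem

theorem case3 (t : ℝ) (ht : 0 ≤ t) (k : ℕ) (hk : 1 ≤ k)
    (n : Fin k → ℕ) (hn : ∀ j, 1 ≤ n j) (j₀ j₁ : Fin k) (hne : j₀ ≠ j₁)
    (h0 : 2 ≤ n j₀) (h1 : 2 ≤ n j₁) :
    Tendsto (fun N : ℕ => (N : ℝ) ^ ((k : ℤ) - ∑ j, (n j : ℤ)) *
        ∫ u, ∏ j : Fin k, ‖entryV u (j : ℕ)‖ ^ (2 * n j) ∂(gaussModelLaw t N)) atTop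
      (𝓝 0) := by
  have H := master t ht k hk n hn
  convert H using 2
  -- all indicators vanish
  have hbig : ∀ j₂ : Fin k, (n j₂ : ℤ) + (k:ℤ) ≤ ∑ j, (n j : ℤ) := by
    intro j₂
    obtain ⟨j', hj'ne, hj'2⟩ : ∃ j', j' ≠ j₂ ∧ 2 ≤ n j' := by
      by_cases hc : j₀ = j₂
      · exact ⟨j₁, by rw [← hc]; exact fun h => hne h.symm, h1⟩
      · exact ⟨j₀, hc, h0⟩
    rw [← Finset.add_sum_erase Finset.univ (fun j => ((n j : ℤ))) (Finset.mem_univ j₂)]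
    have hstrict : (∑ _j ∈ Finset.univ.erase j₂, (1:ℤ))
        < ∑ j ∈ Finset.univ.erase j₂, (n j : ℤ) := by
      refine Finset.sum_lt_sum (fun j _ => by exact_mod_cast hn j) ?_
      exact ⟨j', Finset.mem_erase.2 ⟨hj'ne, Finset.mem_univ j'⟩, by exact_mod_cast hj'2⟩
    have hcard : (∑ _j ∈ Finset.univ.erase j₂, (1:ℤ)) = (k:ℤ) - 1 := by
      rw [Finset.sum_const, Finset.card_erase_of_mem (Finset.mem_univ j₂),
        Finset.card_univ, Fintype.card_fin, nsmul_eq_mul, mul_one, Nat.cast_sub hk]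
      norm_num
    omega
  have hzneg : (∑ j, (n j : ℤ)) ≥ (k:ℤ) + 2 := by
    have := hbig j₀
    have h2' : (2:ℤ) ≤ (n j₀ : ℤ) := by exact_mod_cast h0
    omega
  symm
  rw [Finset.sum_eq_zero, if_neg (by omega), if_neg (by omega)]
  · ring
  · intro j₂ _
    refine Finset.sum_eq_zero fun r hr => ?_
    simp only [Finset.mem_range] at hr
    have := hbig j₂
    rw [if_neg (by omega)]

theorem stmt12 (t : ℝ) (ht : 0 ≤ t) (k : ℕ) (hk : 1 ≤ k)
    (n : Fin k → ℕ) (hn : ∀ j, 1 ≤ n j) :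
    -- case n₁ = ⋯ = n_k = 1:
    ((∀ j, n j = 1) →
      Tendsto (fun N : ℕ => (N : ℝ) ^ ((k : ℤ) - ∑ j, (n j : ℤ)) *
          ∫ u, ∏ j : Fin k, ‖entryV u (j : ℕ)‖ ^ (2 * n j) ∂(gaussModelLaw t N)) atTop
        (𝓝 ((1 - Real.exp (-t)) ^ k +
            k * Real.exp (-t) * (1 - Real.exp (-t)) ^ (k - 1)))) ∧
    -- case where exactly one n_j is ≥ 2:
    (∀ j₀ : Fin k, 2 ≤ n j₀ → (∀ j, j ≠ j₀ → n j = 1) →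
      Tendsto (fun N : ℕ => (N : ℝ) ^ ((k : ℤ) - ∑ j, (n j : ℤ)) *
          ∫ u, ∏ j : Fin k, ‖entryV u (j : ℕ)‖ ^ (2 * n j) ∂(gaussModelLaw t N)) atTop
        (𝓝 (Real.exp (-(n j₀ : ℝ) * t) * (1 - Real.exp (-t)) ^ (k - 1)))) ∧
    -- case where at least two n_j are ≥ 2:
    (∀ j₀ j₁ : Fin k, j₀ ≠ j₁ → 2 ≤ n j₀ → 2 ≤ n j₁ →
      Tendsto (fun N : ℕ => (N : ℝ) ^ ((k : ℤ) - ∑ j, (n j : ℤ)) *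
          ∫ u, ∏ j : Fin k, ‖entryV u (j : ℕ)‖ ^ (2 * n j) ∂(gaussModelLaw t N)) atTop
        (𝓝 0)) :=
  ⟨fun h1 => case1 t ht k hk n hn h1,
   fun j₀ h2 hother => case2 t ht k hk n hn j₀ h2 hother,
   fun j₀ j₁ hne h0 h1 => case3 t ht k hk n hn j₀ j₁ hne h0 h1⟩

end
end
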